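/- Let A be an index type, d ≥ 1 a natural number, and a : (A →₀ ℕ) → ℝ a superexponential d-regular admissible positive function; set A_d = (∑_α a_α^{−d})^{1/2} (a finite number). Let f : (A →₀ ℕ) → ℂ with ‖f‖_p < ∞ for some p ∈ ℕ. Then for every n ∈ ℕ the n-th convolution power f^{*n} satisfies ‖f^{*n}‖_{p+d} ≤ A_d^{n} · ‖f‖_p^{n}. -/

import Mathlib

open scoped ENNReal

set_option linter.unusedSectionVars false
set_option linter.unusedVariables false

section aux
variable {A : Type*} [DecidableEq A]

private lemma aux_pow_single_le (b : (A →₀ ℕ) → ℝ)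
    (hpos : ∀ α, 0 < b α) (h0 : b 0 = 1)
    (hsup : ∀ α β : A →₀ ℕ, b α * b β ≤ b (α + β)) (n : A) :
    ∀ k : ℕ, b (Finsupp.single n 1) ^ k ≤ b (Finsupp.single n k) := by
  intro k
  induction k with
  | zero => simp [h0]
  | succ k ih =>
    have h1 : b (Finsupp.single n 1) ^ (k + 1)
        = b (Finsupp.single n k) * b (Finsupp.single n 1) * (b (Finsupp.single n 1) ^ k / b (Finsupp.single n k)) := by
      field_simp [(hpos (Finsupp.single n k)).ne', (hpos (Finsupp.single n 1)).ne']
      ring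
    calc b (Finsupp.single n 1) ^ (k + 1) = b (Finsupp.single n 1) ^ k * b (Finsupp.single n 1) := pow_succ _ _
      _ ≤ b (Finsupp.single n k) * b (Finsupp.single n 1) :=
          mul_le_mul_of_nonneg_right ih (hpos _).le
      _ ≤ b (Finsupp.single n k + Finsupp.single n 1) := hsup _ _
      _ = b (Finsupp.single n (k + 1)) := by rw [← Finsupp.single_add]

private lemma aux_prod_le (b : (A →₀ ℕ) → ℝ)
    (hpos : ∀ α, 0 < b α) (h0 : b 0 = 1)
    (hsup : ∀ α β : A →₀ ℕ, b α * b β ≤ b (α + β)) (α : A →₀ ℕ) :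
    α.prod (fun n k => b (Finsupp.single n 1) ^ k) ≤ b α := by
  induction α using Finsupp.induction with
  | zero => simp [h0, Finsupp.prod_zero_index]
  | single_add n k β hn hk ih =>
    rw [Finsupp.prod_add_index' (fun _ => pow_zero _) (fun a b₁ b₂ => pow_add _ _ _),
      Finsupp.prod_single_index (h := fun n k => b (Finsupp.single n 1) ^ k) (pow_zero _)]
    have hβ : (0:ℝ) ≤ β.prod fun n k => b (Finsupp.single n 1) ^ k := by
      exact Finset.prod_nonneg fun i _ => pow_nonneg (hpos _).le _
    calc b (Finsupp.single n 1) ^ k * β.prod (fun n k => b (Finsupp.single n 1) ^ k)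
        ≤ b (Finsupp.single n k) * b β :=
          mul_le_mul (aux_pow_single_le b hpos h0 hsup n k) ih hβ (hpos _).le
      _ ≤ b (Finsupp.single n k + β) := hsup _ _

private lemma aux_summable (b : (A →₀ ℕ) → ℝ)
    (hpos : ∀ α, 0 < b α) (h0 : b 0 = 1)
    (hgen : ∀ n : A, 1 < b (Finsupp.single n 1))
    (hreg : Summable fun n : A => 1 / (b (Finsupp.single n 1) - 1))
    (hsup : ∀ α β : A →₀ ℕ, b α * b β ≤ b (α + β)) :
    Summable fun α : A →₀ ℕ => 1 / b α := by
  classical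
  set c : A → ℝ := fun n => 1 / (b (Finsupp.single n 1) - 1) with hc
  have hc0 : ∀ n, 0 ≤ c n := by
    intro n
    have : (0:ℝ) < b (Finsupp.single n 1) - 1 := sub_pos.2 (hgen n)
    positivity
  apply summable_of_sum_le (c := Real.exp (∑' n, c n))
  · intro α
    have := hpos α
    positivity
  · intro F
    set s : Finset A := F.sup Finsupp.support with hs
    set M : ℕ := F.sup (fun α => α.sum fun _ k => k) with hM
    have hsupp : ∀ α ∈ F, α.support ⊆ s := fun α hα => Finset.le_sup hα
    have hval : ∀ α ∈ F, ∀ n, α n ≤ M := by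
      intro α hα n
      have h1 : α n ≤ α.sum fun _ k => k := by
        by_cases hn : n ∈ α.support
        · exact Finset.single_le_sum (fun _ _ => Nat.zero_le _) hn
        · simp [Finsupp.notMem_support_iff.1 hn]
      exact h1.trans (Finset.le_sup (f := fun α : A →₀ ℕ => α.sum fun _ k => k) hα)
    set r : A → ℝ := fun n => (b (Finsupp.single n 1))⁻¹ with hr
    have hr0 : ∀ n, 0 ≤ r n := fun n => inv_nonneg.2 (hpos _).le
    have hr1 : ∀ n, r n < 1 := fun n => inv_lt_one_of_one_lt₀ (hgen n)
    have step1 : ∀ α ∈ F, 1 / b α ≤ ∏ n ∈ s, r n ^ (α n) := by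
      intro α hα
      have hprodeq : α.prod (fun n k => b (Finsupp.single n 1) ^ k)
          = ∏ n ∈ s, b (Finsupp.single n 1) ^ (α n) :=
        Finsupp.prod_of_support_subset α (hsupp α hα) _ (fun i _ => pow_zero _)
      have hprod : ∏ n ∈ s, b (Finsupp.single n 1) ^ (α n) ≤ b α := by
        rw [← hprodeq]; exact aux_prod_le b hpos h0 hsup α
      have hprodpos : 0 < ∏ n ∈ s, b (Finsupp.single n 1) ^ (α n) := by
        exact Finset.prod_pos fun i _ => pow_pos (hpos _) _
      calc 1 / b α ≤ 1 / ∏ n ∈ s, b (Finsupp.single n 1) ^ (α n) :=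
            one_div_le_one_div_of_le hprodpos hprod
        _ = ∏ n ∈ s, r n ^ (α n) := by
            rw [one_div, ← Finset.prod_inv_distrib]
            exact Finset.prod_congr rfl fun n _ => (inv_pow _ _).symm
    have step2 : ∑ α ∈ F, ∏ n ∈ s, r n ^ (α n)
        ≤ ∏ n ∈ s, ∑ k ∈ Finset.range (M + 1), r n ^ k := by
      rw [Finset.prod_sum]
      set ι : (A →₀ ℕ) → (∀ n ∈ s, ℕ) := fun α => fun n _ => α n with hι
      have hmem : ∀ α ∈ F, ι α ∈ s.pi (fun _ => Finset.range (M + 1)) := by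
        intro α hα
        rw [Finset.mem_pi]
        intro n hn
        exact Finset.mem_range.2 (Nat.lt_succ_of_le (hval α hα n))
      have hinj : ∀ α ∈ F, ∀ β ∈ F, ι α = ι β → α = β := by
        intro α hα β hβ h
        ext n
        by_cases hn : n ∈ s
        · exact congrFun (congrFun h n) hn
        · rw [Finsupp.notMem_support_iff.1 (fun hm => hn (hsupp α hα hm)),
            Finsupp.notMem_support_iff.1 (fun hm => hn (hsupp β hβ hm))]
      calc ∑ α ∈ F, ∏ n ∈ s, r n ^ (α n)
          = ∑ α ∈ F, ∏ x ∈ s.attach, r x.1 ^ (ι α x.1 x.2) := by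
            refine Finset.sum_congr rfl fun α _ => ?_
            exact (Finset.prod_attach s (fun n => r n ^ (α n))).symm
        _ = ∑ q ∈ F.image ι, ∏ x ∈ s.attach, r x.1 ^ (q x.1 x.2) := by
            rw [Finset.sum_image hinj]
        _ ≤ ∑ q ∈ s.pi (fun _ => Finset.range (M + 1)), ∏ x ∈ s.attach, r x.1 ^ (q x.1 x.2) := by
            apply Finset.sum_le_sum_of_subset_of_nonneg
            · intro q hq
              obtain ⟨α, hα, rfl⟩ := Finset.mem_image.1 hq
              exact hmem α hα
            · intro q _ _
              exact Finset.prod_nonneg fun x _ => pow_nonneg (hr0 _) _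
    have step3 : ∀ n ∈ s, ∑ k ∈ Finset.range (M + 1), r n ^ k ≤ Real.exp (c n) := by
      intro n _
      have hgeo := hasSum_geometric_of_lt_one (hr0 n) (hr1 n)
      have h1 : ∑ k ∈ Finset.range (M + 1), r n ^ k ≤ (1 - r n)⁻¹ := by
        have := Summable.sum_le_tsum (f := fun k => r n ^ k) (Finset.range (M + 1))
          (fun k _ => pow_nonneg (hr0 n) k) hgeo.summable
        rwa [hgeo.tsum_eq] at this
      have hb1 : (1:ℝ) < b (Finsupp.single n 1) := hgen n
      have hbne : b (Finsupp.single n 1) ≠ 0 := (hpos _).ne'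
      have hbne1 : b (Finsupp.single n 1) - 1 ≠ 0 := sub_ne_zero.2 (ne_of_gt hb1)
      have h2 : (1 - r n)⁻¹ = 1 + c n := by
        rw [hr, hc]
        field_simp
        ring
      have h3 : 1 + c n ≤ Real.exp (c n) := by
        have := Real.add_one_le_exp (c n); linarith
      linarith
    calc ∑ α ∈ F, 1 / b α ≤ ∑ α ∈ F, ∏ n ∈ s, r n ^ (α n) := Finset.sum_le_sum step1
      _ ≤ ∏ n ∈ s, ∑ k ∈ Finset.range (M + 1), r n ^ k := step2
      _ ≤ ∏ n ∈ s, Real.exp (c n) := by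
          apply Finset.prod_le_prod (fun n _ => ?_) step3
          exact Finset.sum_nonneg fun k _ => pow_nonneg (hr0 n) k
      _ = Real.exp (∑ n ∈ s, c n) := (Real.exp_sum s c).symm
      _ ≤ Real.exp (∑' n, c n) :=
          Real.exp_le_exp.2 (Summable.sum_le_tsum s (fun n _ => hc0 n) hreg)

end aux


/-- The convolution (Cauchy product) of two families indexed by the free commutative
monoid `A →₀ ℕ`, i.e. multiplication in `MvPowerSeries A ℂ`. -/
noncomputable def conv {A : Type*} [DecidableEq A] (f g : (A →₀ ℕ) → ℂ) : (A →₀ ℕ) → ℂ :=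
  fun γ => ∑ x ∈ Finset.HasAntidiagonal.antidiagonal γ, f x.1 * g x.2

/-- The `n`-th convolution power: `f^{*0} = 1` (the indicator of `α = 0`) and
`f^{*(n+1)} = f * f^{*n}`. -/
noncomputable def convPow {A : Type*} [DecidableEq A] (f : (A →₀ ℕ) → ℂ) : ℕ → (A →₀ ℕ) → ℂ
  | 0 => fun γ => if γ = 0 then 1 else 0
  | n + 1 => conv f (convPow f n)

/-- The squared weighted `ℓ²`-norm `‖f‖_p² = ∑' α, |f α|² a α ^ (-p)`, as a sum in `[0,∞]`. -/
noncomputable def wsum {A : Type*} (a : (A →₀ ℕ) → ℝ) (p : ℕ) (f : (A →₀ ℕ) → ℂ) : ℝ≥0∞ :=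
  ∑' α, ENNReal.ofReal (‖f α‖ ^ 2 / (a α) ^ p)

/-- The weighted `ℓ²`-norm `‖f‖_p`, with values in `[0,∞]`. -/
noncomputable def wnorm {A : Type*} (a : (A →₀ ℕ) → ℝ) (p : ℕ) (f : (A →₀ ℕ) → ℂ) : ℝ≥0∞ :=
  (wsum a p f) ^ (2⁻¹ : ℝ)

section conv
variable {A : Type*} [DecidableEq A]

private lemma aux_tsum_antidiagonal_le (W : ((A →₀ ℕ) × (A →₀ ℕ)) → ℝ≥0∞) :
    ∑' γ : A →₀ ℕ, ∑ x ∈ Finset.HasAntidiagonal.antidiagonal γ, W x ≤ ∑' x, W x := by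
  rw [ENNReal.tsum_eq_iSup_sum]
  apply iSup_le
  intro T
  have hdisj : ∀ γ₁ ∈ (T : Set (A →₀ ℕ)), ∀ γ₂ ∈ (T : Set (A →₀ ℕ)), γ₁ ≠ γ₂ →
      Disjoint (Finset.HasAntidiagonal.antidiagonal γ₁) (Finset.HasAntidiagonal.antidiagonal γ₂) := by
    intro γ₁ _ γ₂ _ hne
    rw [Finset.disjoint_left]
    intro x hx1 hx2
    rw [Finset.HasAntidiagonal.mem_antidiagonal] at hx1 hx2
    exact hne (hx1 ▸ hx2)
  rw [← Finset.sum_biUnion hdisj]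
  exact ENNReal.sum_le_tsum _

private lemma aux_wsum_conv_le (d : ℕ) (a : (A →₀ ℕ) → ℝ)
    (hpos : ∀ α, 0 < a α)
    (hsup : ∀ α β : A →₀ ℕ, a α * a β ≤ a (α + β))
    (hsum : Summable fun α : A →₀ ℕ => 1 / (a α) ^ d)
    (f g : (A →₀ ℕ) → ℂ) (p : ℕ) :
    wsum a (p + d) (conv f g)
      ≤ ENNReal.ofReal (∑' α : A →₀ ℕ, 1 / (a α) ^ d) * (wsum a p f * wsum a (p + d) g) := by
  classical
  set S : ℝ := ∑' α : A →₀ ℕ, 1 / (a α) ^ d with hS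
  have hS0 : 0 ≤ S := tsum_nonneg fun α => by have := hpos α; positivity
  set u : (A →₀ ℕ) → ℝ := fun α => ‖f α‖ ^ 2 / (a α) ^ p with hu
  set v : (A →₀ ℕ) → ℝ := fun β => ‖g β‖ ^ 2 / (a β) ^ (p + d) with hv
  have hu0 : ∀ α, 0 ≤ u α := fun α => by
    have := hpos α; positivity
  have hv0 : ∀ β, 0 ≤ v β := fun β => by
    have := hpos β; positivity
  -- pointwise bound
  have key : ∀ γ : A →₀ ℕ, ‖conv f g γ‖ ^ 2 / (a γ) ^ (p + d)
      ≤ S * ∑ x ∈ Finset.HasAntidiagonal.antidiagonal γ, u x.1 * v x.2 := by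
    intro γ
    have h1 : ‖conv f g γ‖ ≤ ∑ x ∈ Finset.HasAntidiagonal.antidiagonal γ, ‖f x.1‖ * ‖g x.2‖ := by
      refine (norm_sum_le _ _).trans ?_
      exact Finset.sum_le_sum fun x _ => by rw [norm_mul]
    have hCS : (∑ x ∈ Finset.HasAntidiagonal.antidiagonal γ, ‖f x.1‖ * ‖g x.2‖) ^ 2
        ≤ (∑ x ∈ Finset.HasAntidiagonal.antidiagonal γ, ((a x.1) ^ d)⁻¹)
          * ∑ x ∈ Finset.HasAntidiagonal.antidiagonal γ, (a x.1) ^ d * (‖f x.1‖ * ‖g x.2‖) ^ 2 := by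
      have := Finset.sum_mul_sq_le_sq_mul_sq (Finset.HasAntidiagonal.antidiagonal γ)
        (fun x => Real.sqrt (((a x.1) ^ d)⁻¹))
        (fun x => Real.sqrt ((a x.1) ^ d) * (‖f x.1‖ * ‖g x.2‖))
      have heq1 : ∀ x : (A →₀ ℕ) × (A →₀ ℕ),
          Real.sqrt (((a x.1) ^ d)⁻¹) * (Real.sqrt ((a x.1) ^ d) * (‖f x.1‖ * ‖g x.2‖))
            = ‖f x.1‖ * ‖g x.2‖ := by
        intro x
        have hax := hpos x.1
        rw [Real.sqrt_inv, ← mul_assoc,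
          inv_mul_cancel₀ (Real.sqrt_ne_zero'.2 (pow_pos hax d)), one_mul]
      have heq2 : ∀ x : (A →₀ ℕ) × (A →₀ ℕ),
          Real.sqrt (((a x.1) ^ d)⁻¹) ^ 2 = ((a x.1) ^ d)⁻¹ := fun x =>
        Real.sq_sqrt (inv_nonneg.2 (pow_nonneg (hpos x.1).le d))
      have heq3 : ∀ x : (A →₀ ℕ) × (A →₀ ℕ),
          (Real.sqrt ((a x.1) ^ d) * (‖f x.1‖ * ‖g x.2‖)) ^ 2
            = (a x.1) ^ d * (‖f x.1‖ * ‖g x.2‖) ^ 2 := by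
        intro x
        rw [mul_pow, Real.sq_sqrt (pow_nonneg (hpos x.1).le d)]
      simp only [heq1, heq2, heq3] at this
      exact this
    have hfst : ∑ x ∈ Finset.HasAntidiagonal.antidiagonal γ, ((a x.1) ^ d)⁻¹ ≤ S := by
      have hinj : ∀ x ∈ Finset.HasAntidiagonal.antidiagonal γ, ∀ y ∈ Finset.HasAntidiagonal.antidiagonal γ,
          x.1 = y.1 → x = y := by
        intro x hx y hy h
        rw [Finset.HasAntidiagonal.mem_antidiagonal] at hx hy
        have h2 : x.2 = y.2 := by
          have := hx.trans hy.symm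
          rw [h] at this
          exact add_left_cancel this
        exact Prod.ext h h2
      have himg : ∑ x ∈ Finset.HasAntidiagonal.antidiagonal γ, ((a x.1) ^ d)⁻¹
          = ∑ α ∈ (Finset.HasAntidiagonal.antidiagonal γ).image Prod.fst, ((a α) ^ d)⁻¹ := by
        rw [Finset.sum_image hinj]
      rw [himg]
      have := Summable.sum_le_tsum ((Finset.HasAntidiagonal.antidiagonal γ).image Prod.fst)
        (fun α _ => by have := hpos α; positivity) hsum
      rw [hS]
      simpa only [one_div] using this
    have hterm : ∀ x ∈ Finset.HasAntidiagonal.antidiagonal γ,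
        (a x.1) ^ d * (‖f x.1‖ * ‖g x.2‖) ^ 2 / (a γ) ^ (p + d) ≤ u x.1 * v x.2 := by
      intro x hx
      rw [Finset.HasAntidiagonal.mem_antidiagonal] at hx
      have ha1 := hpos x.1
      have ha2 := hpos x.2
      have haγ := hpos γ
      have hle : (a x.1 * a x.2) ^ (p + d) ≤ (a γ) ^ (p + d) := by
        apply pow_le_pow_left₀ (mul_nonneg ha1.le ha2.le)
        rw [← hx]; exact hsup x.1 x.2
      have h1 : (a x.1) ^ d * (‖f x.1‖ * ‖g x.2‖) ^ 2 / (a γ) ^ (p + d)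
          ≤ (a x.1) ^ d * (‖f x.1‖ * ‖g x.2‖) ^ 2 / (a x.1 * a x.2) ^ (p + d) :=
        div_le_div_of_nonneg_left (mul_nonneg (pow_nonneg ha1.le d) (sq_nonneg _))
          (pow_pos (mul_pos ha1 ha2) _) hle
      refine h1.trans_eq ?_
      rw [hu, hv]
      rw [mul_pow (a x.1) (a x.2), pow_add (a x.1), mul_pow ‖f x.1‖]
      field_simp
    calc ‖conv f g γ‖ ^ 2 / (a γ) ^ (p + d)
        ≤ (∑ x ∈ Finset.HasAntidiagonal.antidiagonal γ, ‖f x.1‖ * ‖g x.2‖) ^ 2 / (a γ) ^ (p + d) := by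
          apply div_le_div_of_nonneg_right ?_ (pow_nonneg (hpos γ).le _)
          · exact pow_le_pow_left₀ (norm_nonneg _) h1 2
      _ ≤ (S * ∑ x ∈ Finset.HasAntidiagonal.antidiagonal γ, (a x.1) ^ d * (‖f x.1‖ * ‖g x.2‖) ^ 2)
            / (a γ) ^ (p + d) := by
          apply div_le_div_of_nonneg_right ?_ (pow_nonneg (hpos γ).le _)
          · refine hCS.trans ?_
            apply mul_le_mul_of_nonneg_right hfst
            exact Finset.sum_nonneg fun x _ =>
              mul_nonneg (pow_nonneg (hpos x.1).le d) (sq_nonneg _)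
      _ = S * ∑ x ∈ Finset.HasAntidiagonal.antidiagonal γ,
            (a x.1) ^ d * (‖f x.1‖ * ‖g x.2‖) ^ 2 / (a γ) ^ (p + d) := by
          rw [mul_div_assoc, Finset.sum_div]
      _ ≤ S * ∑ x ∈ Finset.HasAntidiagonal.antidiagonal γ, u x.1 * v x.2 := by
          apply mul_le_mul_of_nonneg_left (Finset.sum_le_sum hterm) hS0
  -- pass to ENNReal
  calc wsum a (p + d) (conv f g)
      ≤ ∑' γ : A →₀ ℕ, ENNReal.ofReal (S * ∑ x ∈ Finset.HasAntidiagonal.antidiagonal γ, u x.1 * v x.2) :=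
        ENNReal.tsum_le_tsum fun γ => ENNReal.ofReal_le_ofReal (key γ)
    _ = ENNReal.ofReal S * ∑' γ : A →₀ ℕ,
          ∑ x ∈ Finset.HasAntidiagonal.antidiagonal γ, ENNReal.ofReal (u x.1) * ENNReal.ofReal (v x.2) := by
        rw [← ENNReal.tsum_mul_left]
        refine tsum_congr fun γ => ?_
        rw [ENNReal.ofReal_mul hS0, ENNReal.ofReal_sum_of_nonneg
          (fun x _ => mul_nonneg (hu0 x.1) (hv0 x.2))]
        congr 1
        exact Finset.sum_congr rfl fun x _ => ENNReal.ofReal_mul (hu0 x.1)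
    _ ≤ ENNReal.ofReal S *
          ∑' x : (A →₀ ℕ) × (A →₀ ℕ), ENNReal.ofReal (u x.1) * ENNReal.ofReal (v x.2) :=
        mul_le_mul_right (aux_tsum_antidiagonal_le _) _
    _ = ENNReal.ofReal S * (wsum a p f * wsum a (p + d) g) := by
        congr 1
        rw [ENNReal.tsum_prod (f := fun α β => ENNReal.ofReal (u α) * ENNReal.ofReal (v β))]
        simp_rw [ENNReal.tsum_mul_left, ENNReal.tsum_mul_right]
        rfl

end conv


/-- For a superexponential `d`-regular admissible positive function `a` and `f` with
`‖f‖_p < ∞`, the convolution powers satisfy `‖f^{*n}‖_{p+d} ≤ A_d ^ n ⬝ ‖f‖_p ^ n`,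
where `A_d = (∑_α a α ^ (-d))^{1/2}`. -/
theorem wnorm_convPow_le {A : Type*} [DecidableEq A]
    (d : ℕ) (hd : 1 ≤ d) (a : (A →₀ ℕ) → ℝ)
    (hpos : ∀ α, 0 < a α)
    (h0 : a 0 = 1)
    (hgen : ∀ n : A, 1 < a (Finsupp.single n 1))
    (hreg : Summable fun n : A => 1 / ((a (Finsupp.single n 1)) ^ d - 1))
    (hsup : ∀ α β : A →₀ ℕ, a α * a β ≤ a (α + β))
    (f : (A →₀ ℕ) → ℂ) (p : ℕ) (hf : wnorm a p f < ⊤) :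
    ∀ n : ℕ, wnorm a (p + d) (convPow f n)
      ≤ (ENNReal.ofReal (Real.sqrt (∑' α : A →₀ ℕ, 1 / (a α) ^ d))) ^ n
          * (wnorm a p f) ^ n := by
  have hsum : Summable (fun α : A →₀ ℕ => 1 / (a α) ^ d) := by
    have hb := aux_summable (fun α => a α ^ d) (fun α => pow_pos (hpos α) d)
      (by simp [h0]) (fun n => one_lt_pow₀ (hgen n) (by omega)) hreg
      (fun α β => by
        rw [← mul_pow]
        exact pow_le_pow_left₀ (mul_nonneg (hpos α).le (hpos β).le) (hsup α β) d)
    simpa using hb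
  set S : ℝ := ∑' α : A →₀ ℕ, 1 / (a α) ^ d with hS
  have hSpos : 0 < S := by
    have h1 : (1:ℝ) ≤ S := by
      have := Summable.le_tsum hsum 0 (fun β _ => by have := hpos β; positivity)
      rw [hS]
      simpa [h0, one_div] using this
    linarith
  have hAd : (ENNReal.ofReal S) ^ (2⁻¹ : ℝ) = ENNReal.ofReal (Real.sqrt S) := by
    rw [ENNReal.ofReal_rpow_of_pos hSpos, Real.sqrt_eq_rpow, one_div]
  intro n
  induction n with
  | zero =>
    simp only [pow_zero, mul_one, wnorm, wsum]
    have h1 : ∀ γ : A →₀ ℕ, γ ≠ 0 →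
        ENNReal.ofReal (‖convPow f 0 γ‖ ^ 2 / (a γ) ^ (p + d)) = 0 := by
      intro γ hγ
      simp [convPow, hγ]
    rw [tsum_eq_single 0 h1]
    simp [convPow, h0]
  | succ n ih =>
    have hstep := aux_wsum_conv_le d a hpos hsup hsum f (convPow f n) p
    calc wnorm a (p + d) (convPow f (n + 1))
        = (wsum a (p + d) (conv f (convPow f n))) ^ (2⁻¹ : ℝ) := rfl
      _ ≤ (ENNReal.ofReal S * (wsum a p f * wsum a (p + d) (convPow f n))) ^ (2⁻¹ : ℝ) :=
          ENNReal.rpow_le_rpow hstep (by norm_num)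
      _ = (ENNReal.ofReal S) ^ (2⁻¹ : ℝ)
            * ((wsum a p f) ^ (2⁻¹ : ℝ) * (wsum a (p + d) (convPow f n)) ^ (2⁻¹ : ℝ)) := by
          rw [ENNReal.mul_rpow_of_nonneg _ _ (by norm_num : (0:ℝ) ≤ 2⁻¹),
            ENNReal.mul_rpow_of_nonneg _ _ (by norm_num : (0:ℝ) ≤ 2⁻¹)]
      _ = ENNReal.ofReal (Real.sqrt S) * (wnorm a p f * wnorm a (p + d) (convPow f n)) := by
          rw [hAd]; rfl
      _ ≤ ENNReal.ofReal (Real.sqrt S)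
            * (wnorm a p f * ((ENNReal.ofReal (Real.sqrt S)) ^ n * (wnorm a p f) ^ n)) :=
          mul_le_mul_right (mul_le_mul_right ih _) _
      _ = (ENNReal.ofReal (Real.sqrt S)) ^ (n + 1) * (wnorm a p f) ^ (n + 1) := by ring
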